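/- Let t'_{α'} < t'_{α'+1} < … < t'_{ω'} be real numbers (floating-leg payment dates), δ'_ι > 0 (ι = α',…,ω'−1) be year fractions, B_ι > 0 (ι = α',…,ω') be discount factors with B_{α'} = 1, and L_ι be real numbers (forward Libor rates) such that the pseudo-discounts B̂_ι := 1/(1 + δ'_ι L_ι) are positive. Define the spreads β_ι := (B_{ι+1}/B_ι)/B̂_ι for ι = α',…,ω'−1. Then the floating-leg value satisfies Σ_{ι=α'}^{ω'−1} B_{ι+1} · δ'_ι · L_ι = 1 − B_{ω'} + Σ_{ι=α'}^{ω'−1} B_ι (β_ι − 1). -/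

import Mathlib

/-- Multicurve floating-leg identity:
`Σ B_{ι+1} δ'_ι L_ι = 1 − B_{ω'} + Σ B_ι (β_ι − 1)`. -/
theorem floating_leg_value
    (α' ω' : ℕ) (hω' : α' < ω')
    (t' : ℕ → ℝ) (ht' : ∀ ι ∈ Finset.Ico α' ω', t' ι < t' (ι+1))
    (δ' L B : ℕ → ℝ)
    (hδ' : ∀ ι ∈ Finset.Ico α' ω', 0 < δ' ι)
    (hB : ∀ ι ∈ Finset.Icc α' ω', 0 < B ι) (hBα' : B α' = 1)
    (Bhat : ℕ → ℝ) (hBhat : ∀ ι, Bhat ι = 1 / (1 + δ' ι * L ι))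
    (hBhatpos : ∀ ι ∈ Finset.Ico α' ω', 0 < Bhat ι)
    (β : ℕ → ℝ) (hβ : ∀ ι, β ι = (B (ι+1) / B ι) / Bhat ι) :
    ∑ ι ∈ Finset.Ico α' ω', B (ι+1) * δ' ι * L ι
      = 1 - B ω' + ∑ ι ∈ Finset.Ico α' ω', B ι * (β ι - 1) := by
  have key : ∀ ι ∈ Finset.Ico α' ω',
      B (ι+1) * δ' ι * L ι = B ι * (β ι - 1) + (B ι - B (ι+1)) := by
    intro ι hι
    have hιm := Finset.mem_Ico.mp hι
    have hBι : 0 < B ι := hB ι (Finset.mem_Icc.mpr ⟨hιm.1, hιm.2.le⟩)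
    have hBι1 : 0 < B (ι+1) := hB (ι+1) (Finset.mem_Icc.mpr ⟨le_trans hιm.1 (Nat.le_succ ι), hιm.2⟩)
    have hhat := hBhatpos ι hι
    have hne : (1 + δ' ι * L ι) ≠ 0 := by
      intro h
      rw [hBhat ι, h] at hhat
      simp at hhat
    have hβι : B ι * β ι = B (ι+1) * (1 + δ' ι * L ι) := by
      rw [hβ ι, hBhat ι]
      field_simp
    have : B (ι+1) * δ' ι * L ι = B (ι+1) * (1 + δ' ι * L ι) - B (ι+1) := by ring
    rw [this, ← hβι]; ring
  rw [Finset.sum_congr rfl key, Finset.sum_add_distrib]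
  have tel : ∑ ι ∈ Finset.Ico α' ω', (B ι - B (ι+1)) = B α' - B ω' := by
    obtain h := hω'.le; clear key hBhatpos hB hδ' ht' hω'
    induction ω', h using Nat.le_induction with
    | base => simp
    | succ n hn ih =>
      rw [Finset.sum_Ico_succ_top hn, ih]; ring
  rw [tel, hBα']; ring
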